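/- The limit as q → ∞ of δ^{rk}_3(4, 4, 2; q) = [ (1/2) q^7 (q^3-1)(q^2-1)(q-1)(q^3-q^2-q-1)(q^8-1)(q^4-1) ] / [ (q^{16}-1)(q^{12}-1) ] equals 1/2. -/
import Mathlib

open Polynomial Filter

noncomputable def Pnum : ℝ[X] :=
  C (1/2) * X ^ 7 * (X ^ 3 - 1) * (X ^ 2 - 1) * (X - 1) *
    (X ^ 3 - X ^ 2 - X - 1) * (X ^ 8 - 1) * (X ^ 4 - 1)

noncomputable def Qden : ℝ[X] := (X ^ 16 - 1) * (X ^ 12 - 1)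

/-- The density of 2-dimensional MRD codes in `F_{q^4}^4`,
`δ^rk_3(4,4,2;q) = (1/2) q^7 (q^3-1)(q^2-1)(q-1)(q^3-q^2-q-1)(q^8-1)(q^4-1)
                    / ((q^{16}-1)(q^{12}-1))`,
tends to `1/2` as `q → ∞`. -/
theorem density_MRD_m4_tendsto_half :
    Filter.Tendsto
      (fun q : ℕ =>
        (1 / 2 : ℝ) * (q : ℝ) ^ 7 * ((q : ℝ) ^ 3 - 1) * ((q : ℝ) ^ 2 - 1) * ((q : ℝ) - 1) *
            ((q : ℝ) ^ 3 - (q : ℝ) ^ 2 - (q : ℝ) - 1) * ((q : ℝ) ^ 8 - 1) * ((q : ℝ) ^ 4 - 1) /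
          (((q : ℝ) ^ 16 - 1) * ((q : ℝ) ^ 12 - 1)))
      Filter.atTop (nhds (1 / 2)) := by
  have hdP : Pnum.degree = 28 := by unfold Pnum; compute_degree!
  have hdQ : Qden.degree = 28 := by unfold Qden; compute_degree!
  have hdeg : Qden.degree = Pnum.degree := by rw [hdP, hdQ]
  have hP : Pnum.leadingCoeff = 1/2 := by
    have h1 : (X ^ 3 - X ^ 2 - X - 1 : ℝ[X]).Monic := by monicity!
    have h2 : ∀ n : ℕ, 0 < n → (X ^ n - 1 : ℝ[X]).Monic := by
      intro n hn
      simpa using monic_X_pow_sub_C (1 : ℝ) hn.ne'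
    have h3 : (X - 1 : ℝ[X]).Monic := by monicity!
    simp [Pnum, leadingCoeff_mul, h1.leadingCoeff, h3.leadingCoeff,
      (h2 3 (by norm_num)).leadingCoeff, (h2 2 (by norm_num)).leadingCoeff,
      (h2 8 (by norm_num)).leadingCoeff, (h2 4 (by norm_num)).leadingCoeff]
  have hQ : Qden.leadingCoeff = 1 := by
    show Qden.Monic
    unfold Qden; monicity!
  have key := Polynomial.div_tendsto_leadingCoeff_div_of_degree_eq Pnum Qden hdeg.symm
  rw [hP, hQ] at key
  have key2 := key.comp (tendsto_natCast_atTop_atTop (R := ℝ))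
  simp only [div_one] at key2
  convert key2 using 2 with q
  simp [Pnum, Qden, Function.comp]
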